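/- Let Δ ≥ 1 and let n and m be non-negative integers such that 2m ≤ Δ·n and C(Δ+1,2) divides m. Then there exists a finite simple graph G with n vertices, m edges, and maximum degree at most Δ such that c(G) = 1 + n + (2^{Δ+1} − Δ − 2)·(m / C(Δ+1,2)). -/

import Mathlib

/-- The number of cliques (sets of pairwise adjacent vertices, including the
empty clique) of a graph. -/
noncomputable def cliqueCount {V : Type*} (G : SimpleGraph V) : ℕ :=
  Nat.card {s : Finset V // G.IsClique (s : Set V)}

/-- For all `Δ ≥ 1`, `n`, `m` with `2m ≤ Δn` and `C(Δ+1,2) ∣ m`, there is a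
graph with `n` vertices, `m` edges, maximum degree at most `Δ`, and exactly
`1 + n + (2^(Δ+1) - Δ - 2)·m/C(Δ+1,2)` cliques. -/
theorem clique_count_bounded_degree_exists (Δ n m : ℕ) (hΔ : 1 ≤ Δ)
    (hm : 2 * m ≤ Δ * n) (hdvd : (Δ + 1).choose 2 ∣ m) :
    ∃ G : SimpleGraph (Fin n),
      (∀ v, Nat.card (G.neighborSet v) ≤ Δ) ∧ Nat.card G.edgeSet = m ∧
        cliqueCount G = 1 + n + (2 ^ (Δ + 1) - Δ - 2) * (m / (Δ + 1).choose 2) := by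
  classical
  set d := Δ + 1 with hd
  set k := m / (Δ + 1).choose 2 with hk
  have hd0 : 0 < d := Nat.succ_pos _
  have hchoose2 : 2 * (Δ+1).choose 2 = d * Δ := by
    rw [Nat.choose_two_right]
    simp only [Nat.add_sub_cancel]
    have h : Even ((Δ+1) * Δ) := by
      rcases Nat.even_or_odd Δ with h | h
      · exact h.mul_left _
      · exact (h.add_one).mul_right _
    rw [Nat.two_mul_div_two_of_even h]
  have hm' : m = k * (Δ+1).choose 2 := (Nat.div_mul_cancel hdvd).symm
  have h2m : 2 * m = Δ * (k * d) := by
    rw [hm']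
    calc 2 * (k * (Δ+1).choose 2) = k * (2 * (Δ+1).choose 2) := by ring
    _ = k * (d * Δ) := by rw [hchoose2]
    _ = Δ * (k * d) := by ring
  have hkd : k * d ≤ n := by
    have : Δ * (k * d) ≤ Δ * n := by rw [← h2m]; exact hm
    exact Nat.le_of_mul_le_mul_left this hΔ
  -- the graph: blocks of size d = Δ+1, first k blocks are cliques
  let G : SimpleGraph (Fin n) :=
    { Adj := fun v w => (v:ℕ)/d = (w:ℕ)/d ∧ (v:ℕ)/d < k ∧ v ≠ w
      symm := by
        refine ⟨fun v w h => ?_⟩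
        exact ⟨h.1.symm, h.1 ▸ h.2.1, h.2.2.symm⟩
      loopless := ⟨fun v h => h.2.2 rfl⟩ }
  have hAdj : ∀ v w : Fin n, G.Adj v w ↔ (v:ℕ)/d = (w:ℕ)/d ∧ (v:ℕ)/d < k ∧ v ≠ w :=
    fun _ _ => Iff.rfl
  set B : ℕ → Finset (Fin n) := fun i => Finset.univ.filter (fun v : Fin n => (v:ℕ)/d = i)
    with hB
  have hBmem : ∀ i (v : Fin n), v ∈ B i ↔ (v:ℕ)/d = i := by
    intro i v; simp [hB]
  have hBle : ∀ i, (B i).card ≤ d := by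
    intro i
    have : ∀ v ∈ B i, (v:ℕ) % d ∈ Finset.range d := by
      intro v _; exact Finset.mem_range.mpr (Nat.mod_lt _ hd0)
    refine le_trans (Finset.card_le_card_of_injOn (fun v => (v:ℕ) % d) this ?_)
      (by simp)
    intro v hv w hw hvw
    have hv' := (hBmem i v).mp hv
    have hw' := (hBmem i w).mp hw
    have hvw' : (v:ℕ) % d = (w:ℕ) % d := hvw
    have : (v:ℕ) = (w:ℕ) := by
      conv_lhs => rw [← Nat.div_add_mod (v:ℕ) d]
      conv_rhs => rw [← Nat.div_add_mod (w:ℕ) d]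
      rw [hv', hw', hvw']
    exact Fin.ext this
  have hBcard : ∀ i, i < k → (B i).card = d := by
    intro i hik
    have hlt : ∀ j, j < d → i * d + j < n := by
      intro j hj
      have h1 : i * d + j < (i+1) * d := by
        rw [add_mul, one_mul]; omega
      have h2 : (i+1) * d ≤ k * d := Nat.mul_le_mul_right d hik
      omega
    have hbij : (B i).card = (Finset.range d).card := by
      refine Finset.card_bij' (fun v _ => (v:ℕ) % d)
        (fun j hj => (⟨i * d + j, hlt j (Finset.mem_range.mp hj)⟩ : Fin n)) ?_ ?_ ?_ ?_
      · intro v hv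
        exact Finset.mem_range.mpr (Nat.mod_lt _ hd0)
      · intro j hj
        rw [hBmem]
        simp only
        rw [add_comm, Nat.add_mul_div_right _ _ hd0,
          Nat.div_eq_of_lt (Finset.mem_range.mp hj)]
        omega
      · intro v hv
        have hv' := (hBmem _ _).mp hv
        apply Fin.ext
        simp only
        rw [← hv', Nat.div_add_mod']
      · intro j hj
        simp only
        rw [add_comm, Nat.add_mul_mod_self_right, Nat.mod_eq_of_lt (Finset.mem_range.mp hj)]
    simpa using hbij
  -- neighbor sets
  have hnbhd : ∀ v : Fin n, G.neighborSet v ⊆ ((B ((v:ℕ)/d)).erase v : Finset (Fin n)) := by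
    intro v w hw
    rw [SimpleGraph.mem_neighborSet, hAdj] at hw
    simp only [Finset.coe_erase, Set.mem_diff, Set.mem_singleton_iff, Finset.mem_coe]
    exact ⟨(hBmem _ _).mpr hw.1.symm, fun h => hw.2.2 h.symm⟩
  have hdeg : ∀ v, Nat.card (G.neighborSet v) ≤ Δ := by
    intro v
    have h1 : Nat.card (G.neighborSet v) = (G.neighborSet v).ncard := Nat.card_coe_set_eq _
    rw [h1]
    calc (G.neighborSet v).ncard ≤ (((B ((v:ℕ)/d)).erase v : Finset (Fin n)) : Set (Fin n)).ncard :=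
          Set.ncard_le_ncard (hnbhd v) (Set.toFinite _)
      _ = ((B ((v:ℕ)/d)).erase v).card := Set.ncard_coe_finset _
      _ = (B ((v:ℕ)/d)).card - 1 := Finset.card_erase_of_mem ((hBmem _ _).mpr rfl)
      _ ≤ d - 1 := by have := hBle ((v:ℕ)/d); omega
      _ = Δ := by omega
  -- neighborFinset / degrees
  have hnfin : ∀ v : Fin n, (v:ℕ)/d < k → G.neighborFinset v = (B ((v:ℕ)/d)).erase v := by
    intro v hv
    ext w
    rw [SimpleGraph.mem_neighborFinset, hAdj, Finset.mem_erase, hBmem]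
    constructor
    · rintro ⟨h1, _, h3⟩; exact ⟨fun h => h3 h.symm, h1.symm⟩
    · rintro ⟨h1, h2⟩; exact ⟨h2.symm, hv, fun h => h1 h.symm⟩
  have hnfin0 : ∀ v : Fin n, ¬ ((v:ℕ)/d < k) → G.neighborFinset v = ∅ := by
    intro v hv
    ext w
    rw [SimpleGraph.mem_neighborFinset, hAdj]
    simp only [Finset.notMem_empty, iff_false]
    rintro ⟨_, h2, _⟩; exact hv h2
  have hdegree : ∀ v : Fin n, G.degree v = if (v:ℕ)/d < k then Δ else 0 := by
    intro v
    rw [SimpleGraph.degree]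
    split_ifs with h
    · rw [hnfin v h, Finset.card_erase_of_mem ((hBmem _ _).mpr rfl), hBcard _ h]
      omega
    · rw [hnfin0 v h, Finset.card_empty]
  -- count of vertices in the first k blocks
  have hcardlt : (Finset.univ.filter (fun v : Fin n => (v:ℕ)/d < k)).card = k * d := by
    rw [show k * d = (Finset.range (k*d)).card by simp]
    refine Finset.card_bij' (fun v _ => (v:ℕ))
      (fun j hj => (⟨j, lt_of_lt_of_le (Finset.mem_range.mp hj) hkd⟩ : Fin n)) ?_ ?_ ?_ ?_
    · intro v hv
      rw [Finset.mem_filter] at hv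
      exact Finset.mem_range.mpr ((Nat.div_lt_iff_lt_mul hd0).mp hv.2)
    · intro j hj
      rw [Finset.mem_filter]
      exact ⟨Finset.mem_univ _, (Nat.div_lt_iff_lt_mul hd0).mpr (Finset.mem_range.mp hj)⟩
    · intro v _; exact Fin.ext rfl
    · intro j _; rfl
  -- edge count
  have hedges : Nat.card G.edgeSet = m := by
    have hsum : ∑ v : Fin n, G.degree v = 2 * G.edgeFinset.card :=
      SimpleGraph.sum_degrees_eq_twice_card_edges G
    have hsum2 : ∑ v : Fin n, G.degree v = Δ * (k * d) := by
      calc ∑ v : Fin n, G.degree v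
          = ∑ v : Fin n, if (v:ℕ)/d < k then Δ else 0 := by
            exact Finset.sum_congr rfl (fun v _ => hdegree v)
        _ = (Finset.univ.filter (fun v : Fin n => (v:ℕ)/d < k)).card * Δ := by
            rw [Finset.sum_ite, Finset.sum_const, Finset.sum_const]
            simp
        _ = Δ * (k * d) := by rw [hcardlt]; ring
    have : 2 * G.edgeFinset.card = 2 * m := by rw [← hsum, hsum2, ← h2m]
    have hfc : G.edgeFinset.card = m := by omega
    rw [Nat.card_coe_set_eq, ← SimpleGraph.coe_edgeFinset G, Set.ncard_coe_finset]
    exact hfc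
  -- clique characterization
  have hclique : ∀ s : Finset (Fin n),
      G.IsClique (s : Set (Fin n)) ↔ s.card ≤ 1 ∨ ∃ i, i < k ∧ s ⊆ B i := by
    intro s
    constructor
    · intro h
      by_cases hcard : s.card ≤ 1
      · exact Or.inl hcard
      · right
        obtain ⟨v, hv, w, hw, hvw⟩ := Finset.one_lt_card.mp (show 1 < s.card by omega)
        have hadj := h (Finset.mem_coe.mpr hv) (Finset.mem_coe.mpr hw) hvw
        rw [hAdj] at hadj
        refine ⟨(v:ℕ)/d, hadj.2.1, ?_⟩
        intro u hu
        rw [hBmem]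
        by_cases huv : u = v
        · rw [huv]
        · have h2 := h (Finset.mem_coe.mpr hv) (Finset.mem_coe.mpr hu) (fun e => huv e.symm)
          rw [hAdj] at h2
          exact h2.1.symm
    · rintro (hle | ⟨i, hik, hsub⟩)
      · intro u hu w hw hne
        exact absurd (Finset.card_le_one.mp hle u hu w hw) hne
      · intro u hu w hw hne
        rw [hAdj]
        have hu' := (hBmem i u).mp (hsub hu)
        have hw' := (hBmem i w).mp (hsub hw)
        exact ⟨hu'.trans hw'.symm, hu' ▸ hik, hne⟩
  -- counting cliques
  have hcc : cliqueCount G =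
      (Finset.univ.filter (fun s : Finset (Fin n) => G.IsClique (s : Set (Fin n)))).card := by
    rw [cliqueCount, Nat.card_eq_fintype_card, Fintype.card_subtype]
  set A : Finset (Finset (Fin n)) :=
    insert ∅ (Finset.univ.image (fun v : Fin n => ({v} : Finset (Fin n)))) with hA
  set T : Finset (Finset (Fin n)) :=
    (Finset.range k).biUnion (fun i => (B i).powerset.filter (fun s => 2 ≤ s.card)) with hT
  have hAmem : ∀ s : Finset (Fin n), s ∈ A ↔ s.card ≤ 1 := by
    intro s
    rw [hA, Finset.mem_insert]
    simp only [Finset.mem_image, Finset.mem_univ, true_and]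
    constructor
    · rintro (rfl | ⟨v, rfl⟩) <;> simp
    · intro h
      rcases Nat.le_one_iff_eq_zero_or_eq_one.mp h with h0 | h1
      · exact Or.inl (Finset.card_eq_zero.mp h0)
      · obtain ⟨v, rfl⟩ := Finset.card_eq_one.mp h1
        exact Or.inr ⟨v, rfl⟩
  have hTmem : ∀ s : Finset (Fin n), s ∈ T ↔ (2 ≤ s.card ∧ ∃ i, i < k ∧ s ⊆ B i) := by
    intro s
    rw [hT, Finset.mem_biUnion]
    simp only [Finset.mem_range, Finset.mem_filter, Finset.mem_powerset]
    constructor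
    · rintro ⟨i, h1, h2, h3⟩; exact ⟨h3, i, h1, h2⟩
    · rintro ⟨h3, i, h1, h2⟩; exact ⟨i, h1, h2, h3⟩
  have hS : Finset.univ.filter (fun s : Finset (Fin n) => G.IsClique (s : Set (Fin n)))
      = A ∪ T := by
    ext s
    rw [Finset.mem_filter, Finset.mem_union, hclique, hAmem, hTmem]
    constructor
    · rintro ⟨-, (h | h)⟩
      · exact Or.inl h
      · by_cases hc : s.card ≤ 1
        · exact Or.inl hc
        · exact Or.inr ⟨by omega, h⟩
    · rintro (h | ⟨h1, h2⟩)
      · exact ⟨Finset.mem_univ _, Or.inl h⟩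
      · exact ⟨Finset.mem_univ _, Or.inr h2⟩
  have hAT : Disjoint A T := by
    rw [Finset.disjoint_left]
    intro s hsA hsT
    have h1 := (hAmem s).mp hsA
    have h2 := ((hTmem s).mp hsT).1
    omega
  have hAcard : A.card = n + 1 := by
    rw [hA, Finset.card_insert_of_notMem, Finset.card_image_of_injective _
      Finset.singleton_injective]
    · simp [add_comm]
    · simp only [Finset.mem_image, Finset.mem_univ, true_and, not_exists]
      intro v h
      exact Finset.singleton_ne_empty v h
  have hTcard : T.card = k * (2 ^ d - 1 - d) := by
    rw [hT, Finset.card_biUnion]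
    · have : ∀ i ∈ Finset.range k,
          ((B i).powerset.filter (fun s => 2 ≤ s.card)).card = 2 ^ d - 1 - d := by
        intro i hi
        have hik := Finset.mem_range.mp hi
        have hpow : (B i).powerset.card = 2 ^ d := by
          rw [Finset.card_powerset, hBcard i hik]
        have hsplit := Finset.card_filter_add_card_filter_not
          (s := (B i).powerset) (p := fun s => 2 ≤ s.card)
        have hneg : ((B i).powerset.filter (fun s => ¬ 2 ≤ s.card)).card = d + 1 := by
          have heq : (B i).powerset.filter (fun s => ¬ 2 ≤ s.card)
              = insert ∅ ((B i).image (fun v => ({v} : Finset (Fin n)))) := by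
            ext s
            rw [Finset.mem_filter, Finset.mem_powerset, Finset.mem_insert]
            simp only [Finset.mem_image, not_le]
            constructor
            · rintro ⟨hsub, hcard⟩
              rcases Nat.le_one_iff_eq_zero_or_eq_one.mp (by omega : s.card ≤ 1) with h0 | h1
              · exact Or.inl (Finset.card_eq_zero.mp h0)
              · obtain ⟨v, rfl⟩ := Finset.card_eq_one.mp h1
                exact Or.inr ⟨v, hsub (Finset.mem_singleton_self v), rfl⟩
            · rintro (rfl | ⟨v, hv, rfl⟩)
              · simp
              · exact ⟨Finset.singleton_subset_iff.mpr hv, by simp⟩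
          rw [heq, Finset.card_insert_of_notMem, Finset.card_image_of_injective _
            Finset.singleton_injective, hBcard i hik]
          · simp only [Finset.mem_image, not_exists]
            intro v
            rintro ⟨-, h⟩
            exact Finset.singleton_ne_empty v h
        omega
      rw [Finset.sum_congr rfl this, Finset.sum_const, Finset.card_range, smul_eq_mul]
    · intro i hi j hj hij
      rw [Function.onFun, Finset.disjoint_left]
      intro s hsi hsj
      rw [Finset.mem_filter, Finset.mem_powerset] at hsi hsj
      obtain ⟨v, hv⟩ := Finset.card_pos.mp (by omega : 0 < s.card)
      have h1 := (hBmem i v).mp (hsi.1 hv)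
      have h2 := (hBmem j v).mp (hsj.1 hv)
      exact hij (h1 ▸ h2)
  refine ⟨G, hdeg, hedges, ?_⟩
  rw [hcc, hS, Finset.card_union_of_disjoint hAT, hAcard, hTcard]
  have hpow : d + 1 ≤ 2 ^ d := Nat.lt_two_pow_self (n := d)
  have : 2 ^ (Δ + 1) = 2 ^ d := by rw [hd]
  rw [this]
  have : 2 ^ d - 1 - d = 2 ^ d - Δ - 2 := by omega
  rw [this]
  ring
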